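/- Let Λ = {λ_n} be an increasing sequence of positive numbers with λ_n → ∞. If limsup_{n→∞} (λ_n · log n)/n < ∞, then Λ#BV ⊆ HBV, i.e. every 2π-periodic (in each variable) function f : ℝ² → ℝ with Λ#V₁(f) + Λ#V₂(f) < ∞ has bounded harmonic variation. -/

import Mathlib

open scoped ENNReal BigOperators
open Filter Set

noncomputable section

/-- A collection of `n` pairwise nonoverlapping subintervals of `T = [0, 2π]`,
given as pairs of endpoints. -/
def NonoverlapIcc (n : ℕ) (I : Fin n → ℝ × ℝ) : Prop :=
  (∀ i, 0 ≤ (I i).1 ∧ (I i).1 < (I i).2 ∧ (I i).2 ≤ 2 * Real.pi) ∧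
    ∀ i j, i ≠ j → (I i).2 ≤ (I j).1 ∨ (I j).2 ≤ (I i).1

/-- `f : ℝ² → ℝ` (curried) is `2π`-periodic in each variable. -/
def Periodic2 (f : ℝ → ℝ → ℝ) : Prop :=
  ∀ x y : ℝ, f (x + 2 * Real.pi) y = f x y ∧ f x (y + 2 * Real.pi) = f x y

/-- `ΛV₁(f)`: partial `Λ`-variation in the first variable. -/
def LamV1 (Λ : ℕ → ℝ) (f : ℝ → ℝ → ℝ) : ℝ≥0∞ :=
  ⨆ (y ∈ Icc (0:ℝ) (2 * Real.pi)) (n : ℕ) (I : Fin n → ℝ × ℝ) (_ : NonoverlapIcc n I),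
    ENNReal.ofReal (∑ i, |f (I i).2 y - f (I i).1 y| / Λ ((i : ℕ) + 1))

/-- `ΛV₂(f)`: partial `Λ`-variation in the second variable. -/
def LamV2 (Λ : ℕ → ℝ) (f : ℝ → ℝ → ℝ) : ℝ≥0∞ :=
  ⨆ (x ∈ Icc (0:ℝ) (2 * Real.pi)) (m : ℕ) (J : Fin m → ℝ × ℝ) (_ : NonoverlapIcc m J),
    ENNReal.ofReal (∑ j, |f x (J j).2 - f x (J j).1| / Λ ((j : ℕ) + 1))

/-- `ΛV₁,₂(f)`: mixed `Λ`-variation. -/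
def LamV12 (Λ : ℕ → ℝ) (f : ℝ → ℝ → ℝ) : ℝ≥0∞ :=
  ⨆ (n : ℕ) (m : ℕ) (I : Fin n → ℝ × ℝ) (J : Fin m → ℝ × ℝ)
    (_ : NonoverlapIcc n I) (_ : NonoverlapIcc m J),
    ENNReal.ofReal (∑ i, ∑ j,
      |f (I i).1 (J j).1 - f (I i).1 (J j).2 - f (I i).2 (J j).1 + f (I i).2 (J j).2| /
        (Λ ((i : ℕ) + 1) * Λ ((j : ℕ) + 1)))

/-- Total harmonic variation `HV(f) = HV₁(f) + HV₂(f) + HV₁,₂(f)` (with `λ_n = n`).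
`f ∈ HBV` iff `HarmonicV f ≠ ⊤`. -/
def HarmonicV (f : ℝ → ℝ → ℝ) : ℝ≥0∞ :=
  LamV1 (fun n => (n : ℝ)) f + LamV2 (fun n => (n : ℝ)) f + LamV12 (fun n => (n : ℝ)) f

/-- `Λ#V₁(f)`. -/
def LamSharpV1 (Λ : ℕ → ℝ) (f : ℝ → ℝ → ℝ) : ℝ≥0∞ :=
  ⨆ (n : ℕ) (I : Fin n → ℝ × ℝ) (y : Fin n → ℝ)
    (_ : NonoverlapIcc n I) (_ : ∀ i, y i ∈ Icc (0:ℝ) (2 * Real.pi)),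
    ENNReal.ofReal (∑ i, |f (I i).2 (y i) - f (I i).1 (y i)| / Λ ((i : ℕ) + 1))

/-- `Λ#V₂(f)`. -/
def LamSharpV2 (Λ : ℕ → ℝ) (f : ℝ → ℝ → ℝ) : ℝ≥0∞ :=
  ⨆ (m : ℕ) (J : Fin m → ℝ × ℝ) (x : Fin m → ℝ)
    (_ : NonoverlapIcc m J) (_ : ∀ j, x j ∈ Icc (0:ℝ) (2 * Real.pi)),
    ENNReal.ofReal (∑ j, |f (x j) (J j).2 - f (x j) (J j).1| / Λ ((j : ℕ) + 1))

/-- A collection of `n` pairwise nonoverlapping rectangles `[α,β] × [γ,δ] ⊆ T²`,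
encoded as `((α, β), (γ, δ))`. -/
def NonoverlapRect (n : ℕ) (A : Fin n → (ℝ × ℝ) × (ℝ × ℝ)) : Prop :=
  (∀ k, 0 ≤ (A k).1.1 ∧ (A k).1.1 < (A k).1.2 ∧ (A k).1.2 ≤ 2 * Real.pi ∧
        0 ≤ (A k).2.1 ∧ (A k).2.1 < (A k).2.2 ∧ (A k).2.2 ≤ 2 * Real.pi) ∧
    ∀ k l, k ≠ l →
      Disjoint (Ioo (A k).1.1 (A k).1.2 ×ˢ Ioo (A k).2.1 (A k).2.2)
        (Ioo (A l).1.1 (A l).1.2 ×ˢ Ioo (A l).2.1 (A l).2.2)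

/-- `Λ*V(f)` of Dyachenko–Waterman. -/
def LamStarV (Λ : ℕ → ℝ) (f : ℝ → ℝ → ℝ) : ℝ≥0∞ :=
  ⨆ (n : ℕ) (A : Fin n → (ℝ × ℝ) × (ℝ × ℝ)) (_ : NonoverlapRect n A),
    ENNReal.ofReal (∑ k,
      |f (A k).1.1 (A k).2.1 - f (A k).1.1 (A k).2.2 -
        f (A k).1.2 (A k).2.1 + f (A k).1.2 (A k).2.2| / Λ ((k : ℕ) + 1))

/-- Partial `p`-variation (first variable); with `Φ(u) = u^p`. -/
def PV1pow (p : ℝ) (f : ℝ → ℝ → ℝ) : ℝ≥0∞ :=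
  ⨆ (y ∈ Icc (0:ℝ) (2 * Real.pi)) (n : ℕ) (I : Fin n → ℝ × ℝ) (_ : NonoverlapIcc n I),
    ENNReal.ofReal (∑ i, |f (I i).2 y - f (I i).1 y| ^ p)

/-- Partial `p`-variation (second variable). -/
def PV2pow (p : ℝ) (f : ℝ → ℝ → ℝ) : ℝ≥0∞ :=
  ⨆ (x ∈ Icc (0:ℝ) (2 * Real.pi)) (m : ℕ) (J : Fin m → ℝ × ℝ) (_ : NonoverlapIcc m J),
    ENNReal.ofReal (∑ j, |f x (J j).2 - f x (J j).1| ^ p)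

/-- `V#_{Φ,1}(f)` for the class `B#V_Φ`. -/
def PhiSharpV1 (Φ : ℝ → ℝ) (f : ℝ → ℝ → ℝ) : ℝ≥0∞ :=
  ⨆ (n : ℕ) (I : Fin n → ℝ × ℝ) (y : Fin n → ℝ)
    (_ : NonoverlapIcc n I) (_ : ∀ i, y i ∈ Icc (0:ℝ) (2 * Real.pi)),
    ENNReal.ofReal (∑ i, Φ |f (I i).2 (y i) - f (I i).1 (y i)|)

/-- `V#_{Φ,2}(f)` for the class `B#V_Φ`. -/
def PhiSharpV2 (Φ : ℝ → ℝ) (f : ℝ → ℝ → ℝ) : ℝ≥0∞ :=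
  ⨆ (m : ℕ) (J : Fin m → ℝ × ℝ) (x : Fin m → ℝ)
    (_ : NonoverlapIcc m J) (_ : ∀ j, x j ∈ Icc (0:ℝ) (2 * Real.pi)),
    ENNReal.ofReal (∑ j, Φ |f (x j) (J j).2 - f (x j) (J j).1|)

/-- Partial modulus of variation `v₁(n, f)`. -/
def modV1 (f : ℝ → ℝ → ℝ) (n : ℕ) : ℝ≥0∞ :=
  ⨆ (y ∈ Icc (0:ℝ) (2 * Real.pi)) (I : Fin n → ℝ × ℝ) (_ : NonoverlapIcc n I),
    ENNReal.ofReal (∑ i, |f (I i).2 y - f (I i).1 y|)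

/-- Partial modulus of variation `v₂(m, f)`. -/
def modV2 (f : ℝ → ℝ → ℝ) (m : ℕ) : ℝ≥0∞ :=
  ⨆ (x ∈ Icc (0:ℝ) (2 * Real.pi)) (J : Fin m → ℝ × ℝ) (_ : NonoverlapIcc m J),
    ENNReal.ofReal (∑ j, |f x (J j).2 - f x (J j).1|)

/-- `v₁#(n, f)`. -/
def modSharpV1 (f : ℝ → ℝ → ℝ) (n : ℕ) : ℝ≥0∞ :=
  ⨆ (I : Fin n → ℝ × ℝ) (y : Fin n → ℝ)
    (_ : NonoverlapIcc n I) (_ : ∀ i, y i ∈ Icc (0:ℝ) (2 * Real.pi)),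
    ENNReal.ofReal (∑ i, |f (I i).2 (y i) - f (I i).1 (y i)|)

/-- `v₂#(m, f)`. -/
def modSharpV2 (f : ℝ → ℝ → ℝ) (m : ℕ) : ℝ≥0∞ :=
  ⨆ (J : Fin m → ℝ × ℝ) (x : Fin m → ℝ)
    (_ : NonoverlapIcc m J) (_ : ∀ j, x j ∈ Icc (0:ℝ) (2 * Real.pi)),
    ENNReal.ofReal (∑ j, |f (x j) (J j).2 - f (x j) (J j).1|)

/-- The shifted sequence `Λ_n = {λ_k}_{k=n}^∞`: its `i`-th member (`i ≥ 1`) is `λ_{n+i-1}`. -/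
def ShiftSeq (Λ : ℕ → ℝ) (n : ℕ) : ℕ → ℝ := fun k => Λ (k + n - 1)

/-- The sequence `λ_n = n / log n` (for `n ≥ 2`; the value at `n ≤ 1` is irrelevant). -/
def nlogSeq : ℕ → ℝ := fun n => if n ≤ 1 then 1 else (n : ℝ) / Real.log n

/-- Double Fourier coefficient
`f̂(m,n) = (1/(4π²)) ∫₀^{2π}∫₀^{2π} f(x,y) e^{-imx} e^{-iny} dx dy`. -/
def fCoef (f : ℝ → ℝ → ℝ) (m n : ℤ) : ℂ :=
  (4 * (Real.pi : ℂ) ^ 2)⁻¹ *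
    ∫ x in (0:ℝ)..(2 * Real.pi), ∫ y in (0:ℝ)..(2 * Real.pi),
      (f x y : ℂ) * Complex.exp (-(Complex.I * (m : ℂ) * (x : ℂ))) *
        Complex.exp (-(Complex.I * (n : ℂ) * (y : ℂ)))

/-- Rectangular partial sum `S_{M,N}[f,(x,y)]` of the double Fourier series. -/
def SRect (f : ℝ → ℝ → ℝ) (M N : ℕ) (x y : ℝ) : ℂ :=
  ∑ m ∈ Finset.Icc (-(M : ℤ)) (M : ℤ), ∑ n ∈ Finset.Icc (-(N : ℤ)) (N : ℤ),
    fCoef f m n * Complex.exp (Complex.I * (m : ℂ) * (x : ℂ)) *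
      Complex.exp (Complex.I * (n : ℂ) * (y : ℂ))

/-- One-sided punctured neighborhood filter: from the right if `s = true`,
from the left if `s = false`. -/
def sideF (x : ℝ) (s : Bool) : Filter ℝ :=
  if s then nhdsWithin x (Ioi x) else nhdsWithin x (Iio x)

/-- `HasQuadLim f x y s t L` means the open-quadrant limit of `f` at `(x,y)` from the
quadrant with horizontal direction `s` and vertical direction `t` exists and equals `L`
(e.g. `s = true, t = false` is `f(x+0, y-0)`). -/
def HasQuadLim (f : ℝ → ℝ → ℝ) (x y : ℝ) (s t : Bool) (L : ℝ) : Prop :=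
  Tendsto (fun p : ℝ × ℝ => f p.1 p.2) ((sideF x s) ×ˢ (sideF y t)) (nhds L)

/-- Cesàro numbers `A_k^α = (α+1)(α+2)⋯(α+k)/k!`. -/
def AA (α : ℝ) : ℕ → ℝ
  | 0 => 1
  | k + 1 => AA α k * (α + ((k : ℝ) + 1)) / ((k : ℝ) + 1)

/-- Cesàro `(C; α, β)` means of the double Fourier series of `f`. -/
def cesaro (f : ℝ → ℝ → ℝ) (α β : ℝ) (n m : ℕ) (x y : ℝ) : ℂ :=
  ((1 / (AA α n * AA β m) : ℝ) : ℂ) *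
    ∑ i ∈ Finset.range (n + 1), ∑ j ∈ Finset.range (m + 1),
      ((AA (α - 1) (n - i) * AA (β - 1) (m - j) : ℝ) : ℂ) * SRect f i j x y

end




section AuxStmt5

private lemma lamMono (Λ : ℕ → ℝ) (hmono : ∀ n, 1 ≤ n → Λ n ≤ Λ (n + 1)) :
    ∀ a b : ℕ, 1 ≤ a → a ≤ b → Λ a ≤ Λ b := by
  intro a b ha hab
  induction b, hab using Nat.le_induction with
  | base => exact le_rfl
  | succ b hb ih => exact ih.trans (hmono b (ha.trans hb))

private lemma harm_le (r : ℕ) :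
    (∑ k : Fin r, (1:ℝ)/((k:ℕ)+1)) ≤ 1 + Real.log r := by
  induction r with
  | zero => simp
  | succ r ih =>
    rcases Nat.eq_zero_or_pos r with rfl | hr
    · simp
    · have hr1 : (1:ℝ) ≤ (r:ℝ) := by exact_mod_cast hr
      have hstep : (1:ℝ)/((r:ℝ)+1) ≤ Real.log ((r:ℝ)+1) - Real.log r := by
        have hx : (0:ℝ) < (r:ℝ)/((r:ℝ)+1) := by positivity
        have h := Real.log_le_sub_one_of_pos hx
        rw [Real.log_div (by linarith) (by linarith)] at h
        have h2 : (r:ℝ)/((r:ℝ)+1) - 1 = -(1/((r:ℝ)+1)) := by field_simp; ring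
        linarith
      rw [Fin.sum_univ_castSucc]
      simp only [Fin.coe_castSucc, Fin.val_last]
      push_cast
      linarith

private lemma logsq_step (m : ℕ) (hm : 1 ≤ m) :
    (Real.log ((m:ℝ)+1))^2 - (Real.log m)^2 ≤ 4 * Real.log ((m:ℝ)+1) / ((m:ℝ)+1) := by
  have hm1 : (1:ℝ) ≤ (m:ℝ) := by exact_mod_cast hm
  have hlm : 0 ≤ Real.log m := Real.log_nonneg hm1
  have hll : Real.log m ≤ Real.log ((m:ℝ)+1) := Real.log_le_log (by linarith) (by linarith)
  have hstep : Real.log ((m:ℝ)+1) - Real.log m ≤ 1/(m:ℝ) := by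
    have hx : (0:ℝ) < ((m:ℝ)+1)/(m:ℝ) := by positivity
    have h := Real.log_le_sub_one_of_pos hx
    rw [Real.log_div (by linarith) (by linarith)] at h
    have h2 : ((m:ℝ)+1)/(m:ℝ) - 1 = 1/(m:ℝ) := by field_simp; ring
    linarith
  have hfrac : 1/(m:ℝ) ≤ 2/((m:ℝ)+1) := by
    rw [div_le_div_iff₀ (by linarith) (by linarith)]
    linarith
  have e2 : (Real.log ((m:ℝ)+1) + Real.log m) * (Real.log ((m:ℝ)+1) - Real.log m)
      ≤ (2*Real.log ((m:ℝ)+1)) * (1/(m:ℝ)) := by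
    apply mul_le_mul (by linarith) hstep (by linarith) (by linarith)
  have e3 : (2*Real.log ((m:ℝ)+1)) * (1/(m:ℝ)) ≤ (2*Real.log ((m:ℝ)+1)) * (2/((m:ℝ)+1)) :=
    mul_le_mul_of_nonneg_left hfrac (by linarith)
  have e4 : (2*Real.log ((m:ℝ)+1)) * (2/((m:ℝ)+1)) = 4 * Real.log ((m:ℝ)+1) / ((m:ℝ)+1) := by
    ring
  nlinarith

private lemma exists_K0 (Λ : ℕ → ℝ) (hpos : ∀ n, 1 ≤ n → 0 < Λ n)
    (hlimsup : ∃ C : ℝ, ∀ᶠ n : ℕ in Filter.atTop, Λ n * Real.log n / n ≤ C) :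
    ∃ K₀ : ℝ, 0 < K₀ ∧ ∀ r : ℕ,
      (∑ k : Fin r, (1:ℝ)/((k:ℕ)+1))^2 ≤ K₀ * ∑ k : Fin r, 1/Λ ((k:ℕ)+1) := by
  obtain ⟨C, hC⟩ := hlimsup
  rw [Filter.eventually_atTop] at hC
  obtain ⟨N, hN⟩ := hC
  set N₀ : ℕ := max N 3 with hN₀def
  set C₀ : ℝ := max C 1 with hC₀def
  have hN₀3 : 3 ≤ N₀ := le_max_right _ _
  have hC₀1 : (1:ℝ) ≤ C₀ := le_max_right _ _
  have hC₀pos : (0:ℝ) < C₀ := by linarith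
  have hbig : ∀ k : ℕ, N₀ ≤ k → Λ k * Real.log k / k ≤ C₀ :=
    fun k hk => (hN k ((le_max_left _ _).trans hk)).trans (le_max_left _ _)
  have hterm : ∀ k : ℕ, 0 ≤ 1/Λ (k+1) := fun k => by
    have := hpos (k+1) (by omega); positivity
  have hsig0 : ∀ r : ℕ, 0 ≤ ∑ k : Fin r, 1/Λ ((k:ℕ)+1) :=
    fun r => Finset.sum_nonneg fun k _ => hterm _
  have hΛ1 : 0 < Λ 1 := hpos 1 le_rfl
  have hsig1 : ∀ r : ℕ, 1 ≤ r → 1/Λ 1 ≤ ∑ k : Fin r, 1/Λ ((k:ℕ)+1) := by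
    intro r hr
    have := Finset.single_le_sum (f := fun k : Fin r => 1/Λ ((k:ℕ)+1))
      (fun k _ => hterm _) (Finset.mem_univ (⟨0, hr⟩ : Fin r))
    simpa using this
  have hclaim1 : ∀ k : ℕ, N₀ ≤ k → Real.log k / (C₀ * k) ≤ 1/Λ k := by
    intro k hk
    have hk3 : 3 ≤ k := hN₀3.trans hk
    have hkR : (3:ℝ) ≤ (k:ℝ) := by exact_mod_cast hk3
    have hΛk : 0 < Λ k := hpos k (by omega)
    have hlk : 0 < Real.log k := Real.log_pos (by linarith)
    have h := hbig k hk
    rw [div_le_iff₀ (by linarith : (0:ℝ) < (k:ℝ))] at h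
    rw [div_le_div_iff₀ (by positivity) hΛk]
    nlinarith
  have hsigstep : ∀ r : ℕ, (∑ k : Fin (r+1), 1/Λ ((k:ℕ)+1))
      = (∑ k : Fin r, 1/Λ ((k:ℕ)+1)) + 1/Λ (r+1) := by
    intro r; rw [Fin.sum_univ_castSucc]; simp
  have hclaim3 : ∀ r : ℕ, N₀ ≤ r →
      (Real.log r)^2 - (Real.log N₀)^2 ≤ 4*C₀ * ∑ k : Fin r, 1/Λ ((k:ℕ)+1) := by
    intro r hr
    induction r, hr using Nat.le_induction with
    | base =>
      have := hsig0 N₀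
      nlinarith
    | succ r hr ih =>
      have hstep := logsq_step r (by omega)
      have hc1 := hclaim1 (r+1) (by omega)
      have hC0ne : C₀ ≠ 0 := ne_of_gt hC₀pos
      have h4 : 4 * Real.log ((r:ℝ)+1) / ((r:ℝ)+1) ≤ 4*C₀ * (1/Λ (r+1)) := by
        have h5 := mul_le_mul_of_nonneg_left hc1 (by positivity : (0:ℝ) ≤ 4*C₀)
        push_cast at h5
        have hr0 : (0:ℝ) < (r:ℝ)+1 := by positivity
        calc 4 * Real.log ((r:ℝ)+1) / ((r:ℝ)+1)
            = 4*C₀ * (Real.log ((r:ℝ)+1) / (C₀ * ((r:ℝ)+1))) := by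
              field_simp
          _ ≤ 4*C₀ * (1/Λ (r+1)) := h5
      rw [hsigstep r]
      push_cast at ih ⊢
      nlinarith
  refine ⟨Λ 1 * ((2 + 2*(Real.log N₀)^2) + (1+Real.log N₀)^2) + 8*C₀, ?_, ?_⟩
  · have hlogN₀ : 0 ≤ Real.log N₀ := Real.log_nonneg (by
      have : (3:ℝ) ≤ (N₀:ℝ) := by exact_mod_cast hN₀3
      linarith)
    have h1 : 0 < Λ 1 * ((2 + 2*(Real.log N₀)^2) + (1+Real.log N₀)^2) := by
      apply mul_pos hΛ1; positivity
    linarith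
  · intro r
    rcases Nat.eq_zero_or_pos r with rfl | hr
    · simp
    have hH := harm_le r
    have hH0 : 0 ≤ ∑ k : Fin r, (1:ℝ)/((k:ℕ)+1) := Finset.sum_nonneg fun k _ => by positivity
    have hsig1r := hsig1 r hr
    have hsig0r := hsig0 r
    have hr1R : (1:ℝ) ≤ (r:ℝ) := by exact_mod_cast hr
    have hlogr : 0 ≤ Real.log r := Real.log_nonneg hr1R
    have hN₀R : (3:ℝ) ≤ (N₀:ℝ) := by exact_mod_cast hN₀3
    have hlogN₀ : 0 ≤ Real.log N₀ := Real.log_nonneg (by linarith)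
    have hΛσ : 1 ≤ Λ 1 * ∑ k : Fin r, 1/Λ ((k:ℕ)+1) := by
      calc (1:ℝ) = Λ 1 * (1/Λ 1) := by field_simp
        _ ≤ Λ 1 * ∑ k : Fin r, 1/Λ ((k:ℕ)+1) := mul_le_mul_of_nonneg_left hsig1r hΛ1.le
    have hsq : (∑ k : Fin r, (1:ℝ)/((k:ℕ)+1))^2 ≤ (1+Real.log r)^2 := by nlinarith
    rcases le_or_gt N₀ r with hcase | hcase
    · have h3 := hclaim3 r hcase
      have hsq2 : (1+Real.log r)^2 ≤ 2 + 2*(Real.log r)^2 := by nlinarith [sq_nonneg (1 - Real.log r)]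
      have hA : (2 + 2*(Real.log N₀)^2) ≤ (2 + 2*(Real.log N₀)^2) * (Λ 1 * ∑ k : Fin r, 1/Λ ((k:ℕ)+1)) :=
        le_mul_of_one_le_right (by positivity) hΛσ
      have hB : 0 ≤ Λ 1 * ((1+Real.log N₀)^2 * ∑ k : Fin r, 1/Λ ((k:ℕ)+1)) := by
        apply mul_nonneg hΛ1.le (mul_nonneg (by positivity) hsig0r)
      nlinarith
    · have hrN : (r:ℝ) ≤ (N₀:ℝ) := by exact_mod_cast hcase.le
      have hlogmono : Real.log r ≤ Real.log N₀ := Real.log_le_log (by linarith) hrN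
      have hB : (1+Real.log N₀)^2 ≤ (1+Real.log N₀)^2 * (Λ 1 * ∑ k : Fin r, 1/Λ ((k:ℕ)+1)) :=
        le_mul_of_one_le_right (by positivity) hΛσ
      have hA : 0 ≤ Λ 1 * ((2 + 2*(Real.log N₀)^2) * ∑ k : Fin r, 1/Λ ((k:ℕ)+1)) := by
        apply mul_nonneg hΛ1.le (mul_nonneg (by positivity) hsig0r)
      nlinarith

private lemma exists_Klin (Λ : ℕ → ℝ) (hpos : ∀ n, 1 ≤ n → 0 < Λ n)
    (hmono : ∀ n, 1 ≤ n → Λ n ≤ Λ (n + 1))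
    (hlimsup : ∃ C : ℝ, ∀ᶠ n : ℕ in Filter.atTop, Λ n * Real.log n / n ≤ C) :
    ∃ K : ℝ, 0 < K ∧ ∀ k : ℕ, 1 ≤ k → Λ k ≤ K * k := by
  obtain ⟨C, hC⟩ := hlimsup
  rw [Filter.eventually_atTop] at hC
  obtain ⟨N, hN⟩ := hC
  set N₀ : ℕ := max N 3 with hN₀def
  set C₀ : ℝ := max C 1 with hC₀def
  have hN₀3 : 3 ≤ N₀ := le_max_right _ _
  have hC₀1 : (1:ℝ) ≤ C₀ := le_max_right _ _
  have hbig : ∀ k : ℕ, N₀ ≤ k → Λ k * Real.log k / k ≤ C₀ :=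
    fun k hk => (hN k ((le_max_left _ _).trans hk)).trans (le_max_left _ _)
  have hΛN₀ : 0 < Λ N₀ := hpos N₀ (by omega)
  refine ⟨max (Λ N₀) C₀, lt_of_lt_of_le hΛN₀ (le_max_left _ _), ?_⟩
  intro k hk
  rcases le_or_gt N₀ k with hcase | hcase
  · have hk3 : 3 ≤ k := hN₀3.trans hcase
    have hkR : (3:ℝ) ≤ (k:ℝ) := by exact_mod_cast hk3
    have hΛk : 0 < Λ k := hpos k hk
    have hlog1 : 1 ≤ Real.log k := by
      rw [Real.le_log_iff_exp_le (by linarith)]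
      calc Real.exp 1 ≤ 2.7182818286 := Real.exp_one_lt_d9.le
        _ ≤ 3 := by norm_num
        _ ≤ (k:ℝ) := hkR
    have h := hbig k hcase
    rw [div_le_iff₀ (by linarith : (0:ℝ) < (k:ℝ))] at h
    have h2 : Λ k ≤ Λ k * Real.log k := le_mul_of_one_le_right hΛk.le hlog1
    calc Λ k ≤ C₀ * k := by linarith
      _ ≤ max (Λ N₀) C₀ * k := mul_le_mul_of_nonneg_right (le_max_right _ _) (by positivity)
  · have h1 : Λ k ≤ Λ N₀ := lamMono Λ hmono k N₀ hk hcase.le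
    have hkR : (1:ℝ) ≤ (k:ℝ) := by exact_mod_cast hk
    calc Λ k ≤ Λ N₀ := h1
      _ ≤ Λ N₀ * k := le_mul_of_one_le_right hΛN₀.le hkR
      _ ≤ max (Λ N₀) C₀ * k := mul_le_mul_of_nonneg_right (le_max_left _ _) (by linarith)

end AuxStmt5



section KeyStmt5

private lemma swap_sum (n p : ℕ) (u : Fin n → ℝ) (v : Fin p → ℝ) :
    (∑ i : Fin n, ∑ j : Fin p, min (u i) (v j) * (1/((i:ℕ)+1)) * (1/((j:ℕ)+1)))
      = ∑ j : Fin p, ∑ i : Fin n, min (v j) (u i) * (1/((j:ℕ)+1)) * (1/((i:ℕ)+1)) := by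
  rw [Finset.sum_comm]
  apply Finset.sum_congr rfl; intro j _
  apply Finset.sum_congr rfl; intro i _
  rw [min_comm]; ring

private lemma keyC_step (lam : ℕ → ℝ) (hlam : ∀ n, 1 ≤ n → 0 < lam n) (K₀ : ℝ)
    (hK₀ : ∀ r : ℕ, (∑ k : Fin r, (1:ℝ)/((k:ℕ)+1))^2 ≤ K₀ * ∑ k : Fin r, 1/lam ((k:ℕ)+1))
    (N : ℕ)
    (ih : ∀ n p : ℕ, n + p ≤ N → ∀ (u : Fin n → ℝ) (v : Fin p → ℝ),
      Antitone u → Antitone v → (∀ i, 0 ≤ u i) → (∀ j, 0 ≤ v j) →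
      (∑ i, ∑ j, min (u i) (v j) * (1/((i:ℕ)+1)) * (1/((j:ℕ)+1)))
        ≤ K₀/2 * ((∑ k, u k / lam ((k:ℕ)+1)) + ∑ k, v k / lam ((k:ℕ)+1)))
    (n' p' : ℕ) (hnp : (n'+1) + (p'+1) ≤ N + 1)
    (u : Fin (n'+1) → ℝ) (v : Fin (p'+1) → ℝ)
    (hu : Antitone u) (hv : Antitone v) (hu0 : ∀ i, 0 ≤ u i) (hv0 : ∀ j, 0 ≤ v j)
    (hlast : u (Fin.last n') ≤ v (Fin.last p')) :
    (∑ i, ∑ j, min (u i) (v j) * (1/((i:ℕ)+1)) * (1/((j:ℕ)+1)))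
      ≤ K₀/2 * ((∑ k, u k / lam ((k:ℕ)+1)) + ∑ k, v k / lam ((k:ℕ)+1)) := by
  have hc0 : 0 ≤ u (Fin.last n') := hu0 _
  set c : ℝ := u (Fin.last n') with hc
  have hcu : ∀ i, c ≤ u i := fun i => hu (Fin.le_last i)
  have hcv : ∀ j, c ≤ v j := fun j => hlast.trans (hv (Fin.le_last j))
  set Hn : ℝ := ∑ k : Fin (n'+1), (1:ℝ)/((k:ℕ)+1) with hHn
  set Hp : ℝ := ∑ k : Fin (p'+1), (1:ℝ)/((k:ℕ)+1) with hHp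
  set Sn : ℝ := ∑ k : Fin (n'+1), 1/lam ((k:ℕ)+1) with hSn
  set Sp : ℝ := ∑ k : Fin (p'+1), 1/lam ((k:ℕ)+1) with hSp
  have hmin : ∀ (i : Fin (n'+1)) (j : Fin (p'+1)),
      min (u i) (v j) = c + min (u i - c) (v j - c) := by
    intro i j; rw [min_sub_sub_right]; ring
  have hT1 : (∑ i : Fin (n'+1), ∑ j : Fin (p'+1), c * (1/((i:ℕ)+1)) * (1/((j:ℕ)+1)))
      = c * Hn * Hp := by
    rw [hHn, hHp, show c * (∑ k : Fin (n'+1), (1:ℝ)/((k:ℕ)+1)) * (∑ k : Fin (p'+1), (1:ℝ)/((k:ℕ)+1))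
      = c * ((∑ k : Fin (n'+1), (1:ℝ)/((k:ℕ)+1)) * (∑ k : Fin (p'+1), (1:ℝ)/((k:ℕ)+1))) from by ring,
      Finset.sum_mul_sum, Finset.mul_sum]
    apply Finset.sum_congr rfl; intro i _
    rw [Finset.mul_sum]
    apply Finset.sum_congr rfl; intro j _
    ring
  have hT1le : c * Hn * Hp ≤ K₀/2 * (c*Sn + c*Sp) := by
    have h2 : 2*(Hn*Hp) ≤ Hn^2 + Hp^2 := by nlinarith [sq_nonneg (Hn - Hp)]
    have hn := hK₀ (n'+1)
    have hp := hK₀ (p'+1)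
    rw [← hHn, ← hSn] at hn
    rw [← hHp, ← hSp] at hp
    have h3 := mul_le_mul_of_nonneg_left (h2.trans (add_le_add hn hp)) hc0
    nlinarith [h3]
  set u1 : Fin (n'+1) → ℝ := fun i => u i - c with hu1
  set v1 : Fin (p'+1) → ℝ := fun j => v j - c with hv1
  have hu1last : u1 (Fin.last n') = 0 := by
    show u (Fin.last n') - c = 0
    rw [← hc]; ring
  have hu10 : ∀ i, 0 ≤ u1 i := fun i => sub_nonneg.mpr (hcu i)
  have hv10 : ∀ j, 0 ≤ v1 j := fun j => sub_nonneg.mpr (hcv j)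
  have hu1anti : Antitone u1 := fun i j h => sub_le_sub_right (hu h) c
  have hv1anti : Antitone v1 := fun i j h => sub_le_sub_right (hv h) c
  have hIH := ih n' (p'+1) (by omega) (fun i => u1 (Fin.castSucc i)) v1
      (fun i j h => hu1anti (Fin.castSucc_le_castSucc_iff.mpr h))
      hv1anti (fun i => hu10 _) hv10
  have hT2 : (∑ i : Fin (n'+1), ∑ j : Fin (p'+1), min (u1 i) (v1 j) * (1/((i:ℕ)+1)) * (1/((j:ℕ)+1)))
      = ∑ i : Fin n', ∑ j : Fin (p'+1), min (u1 (Fin.castSucc i)) (v1 j) * (1/((i:ℕ)+1)) * (1/((j:ℕ)+1)) := by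
    rw [Fin.sum_univ_castSucc]
    have hz : (∑ j : Fin (p'+1), min (u1 (Fin.last n')) (v1 j) * (1/(((Fin.last n' : Fin (n'+1)):ℕ)+1)) * (1/((j:ℕ)+1))) = 0 := by
      apply Finset.sum_eq_zero; intro j _
      rw [hu1last, min_eq_left (hv10 j)]
      ring
    rw [hz, add_zero]
    apply Finset.sum_congr rfl; intro i _
    apply Finset.sum_congr rfl; intro j _
    simp [Fin.coe_castSucc]
  have hRu : (∑ k : Fin (n'+1), u k / lam ((k:ℕ)+1))
      = (∑ k : Fin n', u1 (Fin.castSucc k) / lam ((k:ℕ)+1)) + c * Sn := by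
    have e1 : ∀ k : Fin (n'+1), u k / lam ((k:ℕ)+1) = u1 k / lam ((k:ℕ)+1) + c * (1/lam ((k:ℕ)+1)) := by
      intro k
      show u k / lam ((k:ℕ)+1) = (u k - c) / lam ((k:ℕ)+1) + c * (1/lam ((k:ℕ)+1))
      ring
    rw [Finset.sum_congr rfl (fun k _ => e1 k), Finset.sum_add_distrib, ← Finset.mul_sum, ← hSn]
    congr 1
    rw [Fin.sum_univ_castSucc, hu1last]
    simp
  have hRv : (∑ k : Fin (p'+1), v k / lam ((k:ℕ)+1))
      = (∑ k : Fin (p'+1), v1 k / lam ((k:ℕ)+1)) + c * Sp := by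
    have e1 : ∀ k : Fin (p'+1), v k / lam ((k:ℕ)+1) = v1 k / lam ((k:ℕ)+1) + c * (1/lam ((k:ℕ)+1)) := by
      intro k
      show v k / lam ((k:ℕ)+1) = (v k - c) / lam ((k:ℕ)+1) + c * (1/lam ((k:ℕ)+1))
      ring
    rw [Finset.sum_congr rfl (fun k _ => e1 k), Finset.sum_add_distrib, ← Finset.mul_sum, ← hSp]
  have hLHSsplit : (∑ i, ∑ j, min (u i) (v j) * (1/((i:ℕ)+1)) * (1/((j:ℕ)+1)))
      = (∑ i : Fin (n'+1), ∑ j : Fin (p'+1), c * (1/((i:ℕ)+1)) * (1/((j:ℕ)+1)))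
        + (∑ i : Fin (n'+1), ∑ j : Fin (p'+1), min (u1 i) (v1 j) * (1/((i:ℕ)+1)) * (1/((j:ℕ)+1))) := by
    rw [← Finset.sum_add_distrib]
    apply Finset.sum_congr rfl; intro i _
    rw [← Finset.sum_add_distrib]
    apply Finset.sum_congr rfl; intro j _
    rw [hmin i j]; ring
  rw [hLHSsplit, hT1, hRu, hRv, hT2]
  linarith [hIH, hT1le]

private lemma keyC (lam : ℕ → ℝ) (hlam : ∀ n, 1 ≤ n → 0 < lam n) (K₀ : ℝ) (hK₀0 : 0 ≤ K₀)
    (hK₀ : ∀ r : ℕ, (∑ k : Fin r, (1:ℝ)/((k:ℕ)+1))^2 ≤ K₀ * ∑ k : Fin r, 1/lam ((k:ℕ)+1)) :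
    ∀ (N n p : ℕ), n + p ≤ N → ∀ (u : Fin n → ℝ) (v : Fin p → ℝ),
      Antitone u → Antitone v → (∀ i, 0 ≤ u i) → (∀ j, 0 ≤ v j) →
      (∑ i, ∑ j, min (u i) (v j) * (1/((i:ℕ)+1)) * (1/((j:ℕ)+1)))
        ≤ K₀/2 * ((∑ k, u k / lam ((k:ℕ)+1)) + ∑ k, v k / lam ((k:ℕ)+1)) := by
  intro N
  induction N with
  | zero =>
    intro n p hnp u v _ _ _ _
    obtain rfl : n = 0 := by omega
    obtain rfl : p = 0 := by omega
    simp
  | succ N ihN =>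
    intro n p hnp u v hu hv hu0 hv0
    have hRHS0 : 0 ≤ K₀/2 * ((∑ k, u k / lam ((k:ℕ)+1)) + ∑ k, v k / lam ((k:ℕ)+1)) := by
      apply mul_nonneg (by linarith)
      apply add_nonneg
      · exact Finset.sum_nonneg fun k _ => div_nonneg (hu0 _) (hlam _ (by omega)).le
      · exact Finset.sum_nonneg fun k _ => div_nonneg (hv0 _) (hlam _ (by omega)).le
    rcases n with _ | n'
    · simpa using hRHS0
    rcases p with _ | p'
    · simpa using hRHS0
    rcases le_total (u (Fin.last n')) (v (Fin.last p')) with hle | hle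
    · exact keyC_step lam hlam K₀ hK₀ N ihN n' p' hnp u v hu hv hu0 hv0 hle
    · have h := keyC_step lam hlam K₀ hK₀ N ihN p' n' (by omega) v u hv hu hv0 hu0 hle
      rw [swap_sum]
      linarith [h]

end KeyStmt5
-- mixed_bound + stmt5 (appended to defs)
section MainStmt5

private lemma mixed_bound (Λ : ℕ → ℝ) (hpos : ∀ n, 1 ≤ n → 0 < Λ n)
    (f : ℝ → ℝ → ℝ) (B₁ B₂ : ℝ) (hB₁0 : 0 ≤ B₁) (hB₂0 : 0 ≤ B₂)
    (key1 : ∀ (k : ℕ) (I : Fin k → ℝ × ℝ) (y : Fin k → ℝ), NonoverlapIcc k I →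
      (∀ i, y i ∈ Icc (0:ℝ) (2*Real.pi)) →
      (∑ i, |f (I i).2 (y i) - f (I i).1 (y i)| / Λ ((i:ℕ)+1)) ≤ B₁)
    (key2 : ∀ (k : ℕ) (J : Fin k → ℝ × ℝ) (x : Fin k → ℝ), NonoverlapIcc k J →
      (∀ j, x j ∈ Icc (0:ℝ) (2*Real.pi)) →
      (∑ j, |f (x j) (J j).2 - f (x j) (J j).1| / Λ ((j:ℕ)+1)) ≤ B₂)
    (K₀ : ℝ) (hK₀pos : 0 < K₀)
    (hK₀ : ∀ r : ℕ, (∑ k : Fin r, (1:ℝ)/((k:ℕ)+1))^2 ≤ K₀ * ∑ k : Fin r, 1/Λ ((k:ℕ)+1))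
    (n m : ℕ) (I : Fin n → ℝ × ℝ) (J : Fin m → ℝ × ℝ)
    (hI : NonoverlapIcc n I) (hJ : NonoverlapIcc m J) :
    (∑ i, ∑ j, |f (I i).1 (J j).1 - f (I i).1 (J j).2 - f (I i).2 (J j).1 + f (I i).2 (J j).2| /
      ((((i:ℕ)+1 : ℕ):ℝ) * (((j:ℕ)+1 : ℕ):ℝ))) ≤ K₀ * (B₁ + B₂) := by
  have hRHS0 : (0:ℝ) ≤ K₀ * (B₁ + B₂) := mul_nonneg hK₀pos.le (add_nonneg hB₁0 hB₂0)
  rcases Nat.eq_zero_or_pos n with rfl | hn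
  · simpa using hRHS0
  rcases Nat.eq_zero_or_pos m with rfl | hm
  · simpa using hRHS0
  haveI : Nonempty (Fin n) := ⟨⟨0, hn⟩⟩
  haveI : Nonempty (Fin m) := ⟨⟨0, hm⟩⟩
  set a : Fin n → Fin m → ℝ := fun i j =>
    |f (I i).1 (J j).1 - f (I i).1 (J j).2 - f (I i).2 (J j).1 + f (I i).2 (J j).2| with hadef
  have ha0 : ∀ i j, 0 ≤ a i j := fun i j => abs_nonneg _
  set u : Fin n → ℝ := fun i => Finset.univ.sup' Finset.univ_nonempty (a i) with hudef
  set v : Fin m → ℝ := fun j => Finset.univ.sup' Finset.univ_nonempty (fun i => a i j) with hvdef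
  have hau : ∀ i j, a i j ≤ u i := fun i j => Finset.le_sup' (a i) (Finset.mem_univ j)
  have hav : ∀ i j, a i j ≤ v j := fun i j => Finset.le_sup' (fun i => a i j) (Finset.mem_univ i)
  have hu0 : ∀ i, 0 ≤ u i := fun i => le_trans (ha0 i (Classical.arbitrary _)) (hau i _)
  have hv0 : ∀ j, 0 ≤ v j := fun j => le_trans (ha0 (Classical.arbitrary _) j) (hav _ j)
  have hIccJ : ∀ j : Fin m, (J j).1 ∈ Icc (0:ℝ) (2*Real.pi) ∧ (J j).2 ∈ Icc (0:ℝ) (2*Real.pi) := by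
    intro j; obtain ⟨h0, h1, h2⟩ := hJ.1 j
    exact ⟨⟨h0, h1.le.trans h2⟩, ⟨h0.trans h1.le, h2⟩⟩
  have hIccI : ∀ i : Fin n, (I i).1 ∈ Icc (0:ℝ) (2*Real.pi) ∧ (I i).2 ∈ Icc (0:ℝ) (2*Real.pi) := by
    intro i; obtain ⟨h0, h1, h2⟩ := hI.1 i
    exact ⟨⟨h0, h1.le.trans h2⟩, ⟨h0.trans h1.le, h2⟩⟩
  have hperm : ∀ (k : ℕ) (I' : Fin k → ℝ × ℝ), NonoverlapIcc k I' →
      ∀ σ : Equiv.Perm (Fin k), NonoverlapIcc k (fun i => I' (σ i)) :=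
    fun k I' hI' σ => ⟨fun i => hI'.1 (σ i),
      fun i j hij => hI'.2 (σ i) (σ j) (fun h => hij (σ.injective h))⟩
  -- row constraint
  have hcu : ∀ σ : Equiv.Perm (Fin n), (∑ k, u (σ k) / Λ ((k:ℕ)+1)) ≤ B₁ + B₁ := by
    intro σ
    have hex : ∀ i, ∃ j, u i = a i j := by
      intro i
      obtain ⟨b, _, hb⟩ := Finset.exists_mem_eq_sup' Finset.univ_nonempty (a i)
      exact ⟨b, hb⟩
    choose js hjs using hex
    have habd : ∀ i, u i ≤ |f (I i).2 ((J (js i)).2) - f (I i).1 ((J (js i)).2)|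
        + |f (I i).2 ((J (js i)).1) - f (I i).1 ((J (js i)).1)| := by
      intro i
      rw [hjs i]
      show |f (I i).1 (J (js i)).1 - f (I i).1 (J (js i)).2 - f (I i).2 (J (js i)).1 + f (I i).2 (J (js i)).2| ≤ _
      have e : f (I i).1 (J (js i)).1 - f (I i).1 (J (js i)).2 - f (I i).2 (J (js i)).1 + f (I i).2 (J (js i)).2
          = (f (I i).2 (J (js i)).2 - f (I i).1 (J (js i)).2) - (f (I i).2 (J (js i)).1 - f (I i).1 (J (js i)).1) := by
        ring
      rw [e]
      exact abs_sub _ _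
    calc (∑ k, u (σ k) / Λ ((k:ℕ)+1))
        ≤ ∑ k : Fin n, (|f (I (σ k)).2 ((J (js (σ k))).2) - f (I (σ k)).1 ((J (js (σ k))).2)|
            + |f (I (σ k)).2 ((J (js (σ k))).1) - f (I (σ k)).1 ((J (js (σ k))).1)|) / Λ ((k:ℕ)+1) := by
          apply Finset.sum_le_sum; intro k _
          exact div_le_div_of_nonneg_right (habd (σ k)) (hpos _ (by omega)).le
      _ = (∑ k : Fin n, |f (I (σ k)).2 ((J (js (σ k))).2) - f (I (σ k)).1 ((J (js (σ k))).2)| / Λ ((k:ℕ)+1))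
          + ∑ k : Fin n, |f (I (σ k)).2 ((J (js (σ k))).1) - f (I (σ k)).1 ((J (js (σ k))).1)| / Λ ((k:ℕ)+1) := by
          rw [← Finset.sum_add_distrib]
          apply Finset.sum_congr rfl; intro k _; rw [add_div]
      _ ≤ B₁ + B₁ := add_le_add
          (key1 n (fun k => I (σ k)) (fun k => (J (js (σ k))).2) (hperm n I hI σ) (fun k => (hIccJ _).2))
          (key1 n (fun k => I (σ k)) (fun k => (J (js (σ k))).1) (hperm n I hI σ) (fun k => (hIccJ _).1))
  -- column constraint
  have hcv : ∀ τ : Equiv.Perm (Fin m), (∑ k, v (τ k) / Λ ((k:ℕ)+1)) ≤ B₂ + B₂ := by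
    intro τ
    have hex : ∀ j, ∃ i, v j = a i j := by
      intro j
      obtain ⟨b, _, hb⟩ := Finset.exists_mem_eq_sup' Finset.univ_nonempty (fun i => a i j)
      exact ⟨b, hb⟩
    choose is his using hex
    have habd : ∀ j, v j ≤ |f ((I (is j)).2) (J j).2 - f ((I (is j)).2) (J j).1|
        + |f ((I (is j)).1) (J j).2 - f ((I (is j)).1) (J j).1| := by
      intro j
      rw [his j]
      show |f (I (is j)).1 (J j).1 - f (I (is j)).1 (J j).2 - f (I (is j)).2 (J j).1 + f (I (is j)).2 (J j).2| ≤ _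
      have e : f (I (is j)).1 (J j).1 - f (I (is j)).1 (J j).2 - f (I (is j)).2 (J j).1 + f (I (is j)).2 (J j).2
          = (f ((I (is j)).2) (J j).2 - f ((I (is j)).2) (J j).1)
            - (f ((I (is j)).1) (J j).2 - f ((I (is j)).1) (J j).1) := by
        ring
      rw [e]
      exact abs_sub _ _
    calc (∑ k, v (τ k) / Λ ((k:ℕ)+1))
        ≤ ∑ k : Fin m, (|f ((I (is (τ k))).2) (J (τ k)).2 - f ((I (is (τ k))).2) (J (τ k)).1|
            + |f ((I (is (τ k))).1) (J (τ k)).2 - f ((I (is (τ k))).1) (J (τ k)).1|) / Λ ((k:ℕ)+1) := by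
          apply Finset.sum_le_sum; intro k _
          exact div_le_div_of_nonneg_right (habd (τ k)) (hpos _ (by omega)).le
      _ = (∑ k : Fin m, |f ((I (is (τ k))).2) (J (τ k)).2 - f ((I (is (τ k))).2) (J (τ k)).1| / Λ ((k:ℕ)+1))
          + ∑ k : Fin m, |f ((I (is (τ k))).1) (J (τ k)).2 - f ((I (is (τ k))).1) (J (τ k)).1| / Λ ((k:ℕ)+1) := by
          rw [← Finset.sum_add_distrib]
          apply Finset.sum_congr rfl; intro k _; rw [add_div]
      _ ≤ B₂ + B₂ := add_le_add
          (key2 m (fun k => J (τ k)) (fun k => (I (is (τ k))).2) (hperm m J hJ τ) (fun k => (hIccI _).2))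
          (key2 m (fun k => J (τ k)) (fun k => (I (is (τ k))).1) (hperm m J hJ τ) (fun k => (hIccI _).1))
  -- sorting permutations
  obtain ⟨σ, hσ⟩ : ∃ σ : Equiv.Perm (Fin n), Antitone (fun k => u (σ k)) := by
    refine ⟨Tuple.sort (fun i => -u i), ?_⟩
    intro i j hij
    have h := Tuple.monotone_sort (fun i => -u i) hij
    simp only [Function.comp_apply] at h
    simp only [neg_le_neg_iff] at h
    exact h
  obtain ⟨τ, hτ⟩ : ∃ τ : Equiv.Perm (Fin m), Antitone (fun k => v (τ k)) := by
    refine ⟨Tuple.sort (fun j => -v j), ?_⟩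
    intro i j hij
    have h := Tuple.monotone_sort (fun j => -v j) hij
    simp only [Function.comp_apply] at h
    simp only [neg_le_neg_iff] at h
    exact h
  -- rearrangement
  have hwanti : ∀ q : ℕ, Antitone (fun i : Fin q => (1:ℝ)/((i:ℕ)+1)) := by
    intro q i j hij
    have hij' : ((i:ℕ):ℝ) ≤ ((j:ℕ):ℝ) := by exact_mod_cast (Fin.le_def.mp hij)
    exact one_div_le_one_div_of_le (by positivity) (by linarith)
  have hstep1 : ∀ j : Fin m, (∑ i, min (u i) (v j) * (1/((i:ℕ)+1)))
      ≤ ∑ i, min (u (σ i)) (v j) * (1/((i:ℕ)+1)) := by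
    intro j
    have hg : Antitone (fun i => min (u (σ i)) (v j)) := fun i i' h => min_le_min (hσ h) le_rfl
    have hmv : Monovary (fun i : Fin n => (1:ℝ)/((i:ℕ)+1)) (fun i => min (u (σ i)) (v j)) :=
      (hwanti n).monovary hg
    have h := hmv.sum_smul_comp_perm_le_sum_smul (σ := σ⁻¹)
    calc (∑ i, min (u i) (v j) * (1/((i:ℕ)+1)))
        = ∑ i : Fin n, (1/((i:ℕ)+1) : ℝ) • min (u (σ (σ⁻¹ i))) (v j) := by
          apply Finset.sum_congr rfl; intro i _
          rw [Equiv.Perm.inv_def, Equiv.apply_symm_apply]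
          simp [smul_eq_mul, mul_comm]
      _ ≤ ∑ i : Fin n, (1/((i:ℕ)+1) : ℝ) • min (u (σ i)) (v j) := h
      _ = ∑ i, min (u (σ i)) (v j) * (1/((i:ℕ)+1)) := by
          apply Finset.sum_congr rfl; intro i _
          simp [smul_eq_mul, mul_comm]
  have hstep2 : ∀ i : Fin n, (∑ j, min (u (σ i)) (v j) * (1/((j:ℕ)+1)))
      ≤ ∑ j, min (u (σ i)) (v (τ j)) * (1/((j:ℕ)+1)) := by
    intro i
    have hg : Antitone (fun j => min (u (σ i)) (v (τ j))) := fun j j' h => min_le_min le_rfl (hτ h)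
    have hmv : Monovary (fun j : Fin m => (1:ℝ)/((j:ℕ)+1)) (fun j => min (u (σ i)) (v (τ j))) :=
      (hwanti m).monovary hg
    have h := hmv.sum_smul_comp_perm_le_sum_smul (σ := τ⁻¹)
    calc (∑ j, min (u (σ i)) (v j) * (1/((j:ℕ)+1)))
        = ∑ j : Fin m, (1/((j:ℕ)+1) : ℝ) • min (u (σ i)) (v (τ (τ⁻¹ j))) := by
          apply Finset.sum_congr rfl; intro j _
          rw [Equiv.Perm.inv_def, Equiv.apply_symm_apply]
          simp [smul_eq_mul, mul_comm]
      _ ≤ ∑ j : Fin m, (1/((j:ℕ)+1) : ℝ) • min (u (σ i)) (v (τ j)) := h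
      _ = ∑ j, min (u (σ i)) (v (τ j)) * (1/((j:ℕ)+1)) := by
          apply Finset.sum_congr rfl; intro j _
          simp [smul_eq_mul, mul_comm]
  have hre : (∑ i, ∑ j, min (u i) (v j) * (1/((i:ℕ)+1)) * (1/((j:ℕ)+1)))
      ≤ ∑ i, ∑ j, min (u (σ i)) (v (τ j)) * (1/((i:ℕ)+1)) * (1/((j:ℕ)+1)) := by
    calc (∑ i, ∑ j, min (u i) (v j) * (1/((i:ℕ)+1)) * (1/((j:ℕ)+1)))
        = ∑ j : Fin m, (∑ i : Fin n, min (u i) (v j) * (1/((i:ℕ)+1))) * (1/((j:ℕ)+1)) := by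
          rw [Finset.sum_comm]
          apply Finset.sum_congr rfl; intro j _
          rw [Finset.sum_mul]
      _ ≤ ∑ j : Fin m, (∑ i : Fin n, min (u (σ i)) (v j) * (1/((i:ℕ)+1))) * (1/((j:ℕ)+1)) := by
          apply Finset.sum_le_sum; intro j _
          exact mul_le_mul_of_nonneg_right (hstep1 j) (by positivity)
      _ = ∑ i : Fin n, (∑ j : Fin m, min (u (σ i)) (v j) * (1/((j:ℕ)+1))) * (1/((i:ℕ)+1)) := by
          calc (∑ j : Fin m, (∑ i : Fin n, min (u (σ i)) (v j) * (1/((i:ℕ)+1))) * (1/((j:ℕ)+1)))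
              = ∑ j : Fin m, ∑ i : Fin n, min (u (σ i)) (v j) * (1/((i:ℕ)+1)) * (1/((j:ℕ)+1)) := by
                apply Finset.sum_congr rfl; intro j _; rw [Finset.sum_mul]
            _ = ∑ i : Fin n, ∑ j : Fin m, min (u (σ i)) (v j) * (1/((i:ℕ)+1)) * (1/((j:ℕ)+1)) :=
                Finset.sum_comm
            _ = ∑ i : Fin n, (∑ j : Fin m, min (u (σ i)) (v j) * (1/((j:ℕ)+1))) * (1/((i:ℕ)+1)) := by
                apply Finset.sum_congr rfl; intro i _
                rw [Finset.sum_mul]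
                apply Finset.sum_congr rfl; intro j _
                ring
      _ ≤ ∑ i : Fin n, (∑ j : Fin m, min (u (σ i)) (v (τ j)) * (1/((j:ℕ)+1))) * (1/((i:ℕ)+1)) := by
          apply Finset.sum_le_sum; intro i _
          exact mul_le_mul_of_nonneg_right (hstep2 i) (by positivity)
      _ = ∑ i, ∑ j, min (u (σ i)) (v (τ j)) * (1/((i:ℕ)+1)) * (1/((j:ℕ)+1)) := by
          apply Finset.sum_congr rfl; intro i _
          rw [Finset.sum_mul]
          apply Finset.sum_congr rfl; intro j _
          ring
  have hterm : ∀ (i : Fin n) (j : Fin m),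
      a i j / ((((i:ℕ)+1 : ℕ):ℝ) * (((j:ℕ)+1 : ℕ):ℝ))
        ≤ min (u i) (v j) * (1/((i:ℕ)+1)) * (1/((j:ℕ)+1)) := by
    intro i j
    have h1 : a i j ≤ min (u i) (v j) := le_min (hau i j) (hav i j)
    have hcast : ((((i:ℕ)+1 : ℕ)):ℝ) = ((i:ℕ):ℝ)+1 := by push_cast; ring
    have hcastj : ((((j:ℕ)+1 : ℕ)):ℝ) = ((j:ℕ):ℝ)+1 := by push_cast; ring
    rw [hcast, hcastj]
    have he : a i j / ((((i:ℕ):ℝ)+1) * (((j:ℕ):ℝ)+1))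
        = a i j * (1/(((i:ℕ):ℝ)+1)) * (1/(((j:ℕ):ℝ)+1)) := by
      rw [div_eq_mul_inv, mul_inv]
      ring
    rw [he]
    have hwi : (0:ℝ) ≤ 1/(((i:ℕ):ℝ)+1) := by positivity
    have hwj : (0:ℝ) ≤ 1/(((j:ℕ):ℝ)+1) := by positivity
    exact mul_le_mul_of_nonneg_right (mul_le_mul_of_nonneg_right h1 hwi) hwj
  calc (∑ i, ∑ j, a i j / ((((i:ℕ)+1 : ℕ):ℝ) * (((j:ℕ)+1 : ℕ):ℝ)))
      ≤ ∑ i, ∑ j, min (u i) (v j) * (1/((i:ℕ)+1)) * (1/((j:ℕ)+1)) :=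
        Finset.sum_le_sum fun i _ => Finset.sum_le_sum fun j _ => hterm i j
    _ ≤ ∑ i, ∑ j, min (u (σ i)) (v (τ j)) * (1/((i:ℕ)+1)) * (1/((j:ℕ)+1)) := hre
    _ ≤ K₀/2 * ((∑ k, u (σ k) / Λ ((k:ℕ)+1)) + ∑ k, v (τ k) / Λ ((k:ℕ)+1)) :=
        keyC Λ hpos K₀ hK₀pos.le hK₀ (n+m) n m le_rfl (fun k => u (σ k)) (fun k => v (τ k))
          hσ hτ (fun i => hu0 _) (fun j => hv0 _)
    _ ≤ K₀/2 * ((B₁ + B₁) + (B₂ + B₂)) := by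
        have h := add_le_add (hcu σ) (hcv τ)
        exact mul_le_mul_of_nonneg_left h (by positivity)
    _ = K₀ * (B₁ + B₂) := by ring

end MainStmt5

/-- if `limsup λ_n·log n / n < ∞`, then `Λ#BV ⊆ HBV`. -/
theorem stmt5 (Λ : ℕ → ℝ)
    (hpos : ∀ n, 1 ≤ n → 0 < Λ n) (hmono : ∀ n, 1 ≤ n → Λ n ≤ Λ (n + 1))
    (htop : Tendsto Λ atTop atTop)
    (hlimsup : ∃ C : ℝ, ∀ᶠ n : ℕ in atTop, Λ n * Real.log n / n ≤ C)
    (f : ℝ → ℝ → ℝ) (hper : Periodic2 f)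
    (hsharp : LamSharpV1 Λ f + LamSharpV2 Λ f ≠ ⊤) :
    HarmonicV f ≠ ⊤ := by
  obtain ⟨h1top, h2top⟩ := ENNReal.add_ne_top.mp hsharp
  set B₁ : ℝ := (LamSharpV1 Λ f).toReal with hB₁
  set B₂ : ℝ := (LamSharpV2 Λ f).toReal with hB₂
  have hB₁0 : 0 ≤ B₁ := ENNReal.toReal_nonneg
  have hB₂0 : 0 ≤ B₂ := ENNReal.toReal_nonneg
  have key1 : ∀ (k : ℕ) (I : Fin k → ℝ × ℝ) (y : Fin k → ℝ), NonoverlapIcc k I →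
      (∀ i, y i ∈ Icc (0:ℝ) (2*Real.pi)) →
      (∑ i, |f (I i).2 (y i) - f (I i).1 (y i)| / Λ ((i:ℕ)+1)) ≤ B₁ := by
    intro k I y hI hy
    have hnn : 0 ≤ ∑ i, |f (I i).2 (y i) - f (I i).1 (y i)| / Λ ((i:ℕ)+1) :=
      Finset.sum_nonneg fun i _ => div_nonneg (abs_nonneg _) (hpos _ (by omega)).le
    have hle : ENNReal.ofReal (∑ i, |f (I i).2 (y i) - f (I i).1 (y i)| / Λ ((i:ℕ)+1))
        ≤ LamSharpV1 Λ f := by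
      unfold LamSharpV1
      exact le_iSup_of_le k (le_iSup_of_le I (le_iSup_of_le y (le_iSup_of_le hI
        (le_iSup_of_le hy le_rfl))))
    calc (∑ i, |f (I i).2 (y i) - f (I i).1 (y i)| / Λ ((i:ℕ)+1))
        = (ENNReal.ofReal (∑ i, |f (I i).2 (y i) - f (I i).1 (y i)| / Λ ((i:ℕ)+1))).toReal :=
          (ENNReal.toReal_ofReal hnn).symm
      _ ≤ B₁ := ENNReal.toReal_mono h1top hle
  have key2 : ∀ (k : ℕ) (J : Fin k → ℝ × ℝ) (x : Fin k → ℝ), NonoverlapIcc k J →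
      (∀ j, x j ∈ Icc (0:ℝ) (2*Real.pi)) →
      (∑ j, |f (x j) (J j).2 - f (x j) (J j).1| / Λ ((j:ℕ)+1)) ≤ B₂ := by
    intro k J x hJ hx
    have hnn : 0 ≤ ∑ j, |f (x j) (J j).2 - f (x j) (J j).1| / Λ ((j:ℕ)+1) :=
      Finset.sum_nonneg fun j _ => div_nonneg (abs_nonneg _) (hpos _ (by omega)).le
    have hle : ENNReal.ofReal (∑ j, |f (x j) (J j).2 - f (x j) (J j).1| / Λ ((j:ℕ)+1))
        ≤ LamSharpV2 Λ f := by
      unfold LamSharpV2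
      exact le_iSup_of_le k (le_iSup_of_le J (le_iSup_of_le x (le_iSup_of_le hJ
        (le_iSup_of_le hx le_rfl))))
    calc (∑ j, |f (x j) (J j).2 - f (x j) (J j).1| / Λ ((j:ℕ)+1))
        = (ENNReal.ofReal (∑ j, |f (x j) (J j).2 - f (x j) (J j).1| / Λ ((j:ℕ)+1))).toReal :=
          (ENNReal.toReal_ofReal hnn).symm
      _ ≤ B₂ := ENNReal.toReal_mono h2top hle
  obtain ⟨K, hKpos, hK⟩ := exists_Klin Λ hpos hmono hlimsup
  obtain ⟨K₀, hK₀pos, hK₀⟩ := exists_K0 Λ hpos hlimsup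
  have hL1 : LamV1 (fun n => (n:ℝ)) f ≠ ⊤ := by
    refine ne_top_of_le_ne_top (ENNReal.ofReal_ne_top (r := K * B₁)) ?_
    unfold LamV1
    refine iSup_le fun y => iSup_le fun hy => iSup_le fun k => iSup_le fun I =>
      iSup_le fun hI => ?_
    refine ENNReal.ofReal_le_ofReal ?_
    have hstep : ∀ i : Fin k, |f (I i).2 y - f (I i).1 y| / ((((i:ℕ)+1 : ℕ)):ℝ)
        ≤ K * (|f (I i).2 y - f (I i).1 y| / Λ ((i:ℕ)+1)) := by
      intro i
      have hΛ : 0 < Λ ((i:ℕ)+1) := hpos _ (by omega)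
      have hi : (0:ℝ) < ((i:ℕ):ℝ)+1 := by positivity
      have hlin : Λ ((i:ℕ)+1) ≤ K * (((i:ℕ):ℝ)+1) := by
        have h := hK ((i:ℕ)+1) (by omega)
        push_cast at h
        linarith
      have habs : (0:ℝ) ≤ |f (I i).2 y - f (I i).1 y| := abs_nonneg _
      rw [show ((((i:ℕ)+1 : ℕ)):ℝ) = ((i:ℕ):ℝ)+1 from by push_cast; ring]
      rw [div_le_iff₀ hi]
      rw [show K * (|f (I i).2 y - f (I i).1 y| / Λ ((i:ℕ)+1)) * (((i:ℕ):ℝ)+1)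
          = |f (I i).2 y - f (I i).1 y| * (K * (((i:ℕ):ℝ)+1)) / Λ ((i:ℕ)+1) from by ring]
      rw [le_div_iff₀ hΛ]
      exact mul_le_mul_of_nonneg_left hlin habs
    show (∑ i : Fin k, |f (I i).2 y - f (I i).1 y| / ((((i:ℕ)+1 : ℕ)):ℝ)) ≤ K * B₁
    calc (∑ i : Fin k, |f (I i).2 y - f (I i).1 y| / ((((i:ℕ)+1 : ℕ)):ℝ))
        ≤ ∑ i : Fin k, K * (|f (I i).2 y - f (I i).1 y| / Λ ((i:ℕ)+1)) :=
          Finset.sum_le_sum fun i _ => hstep i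
      _ = K * ∑ i : Fin k, |f (I i).2 y - f (I i).1 y| / Λ ((i:ℕ)+1) :=
          (Finset.mul_sum _ _ _).symm
      _ ≤ K * B₁ := mul_le_mul_of_nonneg_left (key1 k I (fun _ => y) hI (fun _ => hy)) hKpos.le
  have hL2 : LamV2 (fun n => (n:ℝ)) f ≠ ⊤ := by
    refine ne_top_of_le_ne_top (ENNReal.ofReal_ne_top (r := K * B₂)) ?_
    unfold LamV2
    refine iSup_le fun x => iSup_le fun hx => iSup_le fun k => iSup_le fun J =>
      iSup_le fun hJ => ?_
    refine ENNReal.ofReal_le_ofReal ?_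
    have hstep : ∀ j : Fin k, |f x (J j).2 - f x (J j).1| / ((((j:ℕ)+1 : ℕ)):ℝ)
        ≤ K * (|f x (J j).2 - f x (J j).1| / Λ ((j:ℕ)+1)) := by
      intro j
      have hΛ : 0 < Λ ((j:ℕ)+1) := hpos _ (by omega)
      have hi : (0:ℝ) < ((j:ℕ):ℝ)+1 := by positivity
      have hlin : Λ ((j:ℕ)+1) ≤ K * (((j:ℕ):ℝ)+1) := by
        have h := hK ((j:ℕ)+1) (by omega)
        push_cast at h
        linarith
      have habs : (0:ℝ) ≤ |f x (J j).2 - f x (J j).1| := abs_nonneg _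
      rw [show ((((j:ℕ)+1 : ℕ)):ℝ) = ((j:ℕ):ℝ)+1 from by push_cast; ring]
      rw [div_le_iff₀ hi]
      rw [show K * (|f x (J j).2 - f x (J j).1| / Λ ((j:ℕ)+1)) * (((j:ℕ):ℝ)+1)
          = |f x (J j).2 - f x (J j).1| * (K * (((j:ℕ):ℝ)+1)) / Λ ((j:ℕ)+1) from by ring]
      rw [le_div_iff₀ hΛ]
      exact mul_le_mul_of_nonneg_left hlin habs
    show (∑ j : Fin k, |f x (J j).2 - f x (J j).1| / ((((j:ℕ)+1 : ℕ)):ℝ)) ≤ K * B₂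
    calc (∑ j : Fin k, |f x (J j).2 - f x (J j).1| / ((((j:ℕ)+1 : ℕ)):ℝ))
        ≤ ∑ j : Fin k, K * (|f x (J j).2 - f x (J j).1| / Λ ((j:ℕ)+1)) :=
          Finset.sum_le_sum fun j _ => hstep j
      _ = K * ∑ j : Fin k, |f x (J j).2 - f x (J j).1| / Λ ((j:ℕ)+1) :=
          (Finset.mul_sum _ _ _).symm
      _ ≤ K * B₂ := mul_le_mul_of_nonneg_left (key2 k J (fun _ => x) hJ (fun _ => hx)) hKpos.le
  have hL12 : LamV12 (fun n => (n:ℝ)) f ≠ ⊤ := by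
    refine ne_top_of_le_ne_top (ENNReal.ofReal_ne_top (r := K₀ * (B₁ + B₂))) ?_
    unfold LamV12
    refine iSup_le fun n => iSup_le fun m => iSup_le fun I => iSup_le fun J =>
      iSup_le fun hI => iSup_le fun hJ => ?_
    refine ENNReal.ofReal_le_ofReal ?_
    exact mixed_bound Λ hpos f B₁ B₂ hB₁0 hB₂0 key1 key2 K₀ hK₀pos hK₀ n m I J hI hJ
  unfold HarmonicV
  exact ENNReal.add_ne_top.mpr ⟨ENNReal.add_ne_top.mpr ⟨hL1, hL2⟩, hL12⟩
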